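/- Let γ, x₀, x₁ ∈ Ω. Then the exact WKB solutions satisfy the Wronskian formula 𝒲(u^±(x,h;γ,x₀), u^∓(x,h;γ,x₁)) = ∓4·w_even^±(x₁,h;x₀), where 𝒲(f,g) = det(f,g); in particular the Wronskian is independent of x. -/

import Mathlib

/-!
STATEMENT 4 (Proposition 2.2, Wronskian formula).

For base points `γ, x₀, x₁ ∈ Ω`, the exact WKB solutions satisfy
`𝒲(u^±(x,h;γ,x₀), u^∓(x,h;γ,x₁)) = ∓4 w_even^±(x₁,h;x₀)` for every `x ∈ Ω`;
in particular the Wronskian is independent of `x`.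

The summed series `(w_even^±, w_odd^±)` with base point `x₀` are characterized by the
(summed) recurrence: `w_even^±(x₀) = 1`, `w_odd^±(x₀) = 0`, `(w_even^±)' = c w_odd^±`,
`(w_odd^±)' ± (2z'/h) w_odd^± = c w_even^±`, with `c = H'/H`, `z' = sq`.
-/

open Complex Set

noncomputable section

/-- Wronskian `𝒲(f,g) = det(f,g)` of two vectors in `ℂ²`. -/
def Wr (f g : ℂ × ℂ) : ℂ := f.1 * g.2 - f.2 * g.1

/-- `(we, wo)` is the pair of summed exact WKB series with sign `s = ±1`, base point
`x₀`, phase derivative `sq` and coefficient `c = H'/H`. -/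
def IsWKBSum (Ω : Set ℂ) (h : ℝ) (s : ℂ) (sq H : ℂ → ℂ) (x₀ : ℂ) (we wo : ℂ → ℂ) : Prop :=
  we x₀ = 1 ∧ wo x₀ = 0 ∧ ∀ x ∈ Ω,
    HasDerivAt we (deriv H x / H x * wo x) x ∧
    HasDerivAt wo (deriv H x / H x * we x - s * (2 * sq x / (h : ℂ)) * wo x) x

/-- The exact WKB solution
`u⁺ = [[1,1],[-i,i]] e^{z/h} Q(x) σ (w_even⁺, w_odd⁺)ᵀ`, written componentwise, where
`Q(x) = [[H⁻¹,H⁻¹],[iH,-iH]]` and `σ = [[0,1],[1,0]]`. -/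
def wkbPlus (h : ℝ) (Z H we wo : ℂ → ℂ) (x : ℂ) : ℂ × ℂ :=
  (Complex.exp (Z x / (h : ℂ)) *
      ((H x)⁻¹ * (wo x + we x) + Complex.I * H x * (wo x - we x)),
   Complex.exp (Z x / (h : ℂ)) *
      (-Complex.I * (H x)⁻¹ * (wo x + we x) - H x * (wo x - we x)))

/-- The exact WKB solution
`u⁻ = [[1,1],[-i,i]] e^{-z/h} Q(x) (w_even⁻, w_odd⁻)ᵀ`, written componentwise. -/
def wkbMinus (h : ℝ) (Z H we wo : ℂ → ℂ) (x : ℂ) : ℂ × ℂ :=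
  (Complex.exp (-Z x / (h : ℂ)) *
      ((H x)⁻¹ * (we x + wo x) + Complex.I * H x * (we x - wo x)),
   Complex.exp (-Z x / (h : ℂ)) *
      (-Complex.I * (H x)⁻¹ * (we x + wo x) - H x * (we x - wo x)))

/-- A function with vanishing derivative on an open preconnected set is constant there. -/
lemma const_of_hasDerivAt_zero {Ω : Set ℂ} (hΩ : IsOpen Ω) (hpc : IsPreconnected Ω)
    {F : ℂ → ℂ} (hF : ∀ x ∈ Ω, HasDerivAt F 0 x) {a b : ℂ} (ha : a ∈ Ω) (hb : b ∈ Ω) :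
    F a = F b := by
  haveI : PreconnectedSpace Ω := Subtype.preconnectedSpace hpc
  have hloc : IsLocallyConstant (fun x : Ω => F x.1) := by
    rw [IsLocallyConstant.iff_eventually_eq]
    rintro ⟨x, hx⟩
    obtain ⟨ε, hε, hball⟩ := Metric.isOpen_iff.1 hΩ x hx
    have hconst : ∀ y ∈ Metric.ball x ε, F y = F x := by
      intro y hy
      refine (convex_ball x ε).is_const_of_fderivWithin_eq_zero
        (𝕜 := ℂ) (fun z hz => ((hF z (hball hz)).differentiableAt).differentiableWithinAt)
        (fun z hz => ?_) hy (Metric.mem_ball_self hε)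
      rw [fderivWithin_of_isOpen Metric.isOpen_ball hz, (hF z (hball hz)).hasFDerivAt.fderiv]
      ext
      simp
    have hmem : Metric.ball x ε ∈ nhds x := Metric.ball_mem_nhds x hε
    have h2 : (Subtype.val ⁻¹' Metric.ball x ε : Set Ω) ∈ nhds (⟨x, hx⟩ : Ω) :=
      continuous_subtype_val.continuousAt.preimage_mem_nhds hmem
    filter_upwards [h2] with y hy
    exact hconst y.1 hy
  exact hloc.apply_eq_of_preconnectedSpace ⟨a, ha⟩ ⟨b, hb⟩

/-- Pointwise algebraic identity for the bracketed parts of the WKB vectors. -/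
lemma wr_bracket (Hx we wo we' wo' : ℂ) (hH : Hx ≠ 0) :
    (Hx⁻¹*(wo+we)+Complex.I*Hx*(wo-we)) * (-Complex.I*Hx⁻¹*(we'+wo') - Hx*(we'-wo'))
      - (-Complex.I*Hx⁻¹*(wo+we) - Hx*(wo-we)) * (Hx⁻¹*(we'+wo')+Complex.I*Hx*(we'-wo'))
      = -4*(we*we' - wo*wo') := by
  field_simp
  ring_nf
  rw [Complex.I_sq]
  ring

/-- **Proposition 2.2.** Wronskian formula
`𝒲(u^±(·,h;γ,x₀), u^∓(·,h;γ,x₁)) = ∓ 4 w_even^±(x₁,h;x₀)`, for all `x ∈ Ω`. -/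
theorem wkb_wronskian_formula
    (A : ℂ → ℂ) (lam : ℂ) (Ω : Set ℂ)
    (hΩopen : IsOpen Ω) (hΩsc : SimplyConnectedSpace Ω)
    (hA : AnalyticOnNhd ℂ A Ω)
    (hnv : ∀ x ∈ Ω, A x ^ 2 - lam ^ 2 ≠ 0)
    (sq H : ℂ → ℂ)
    (hsq_an : AnalyticOnNhd ℂ sq Ω) (hH_an : AnalyticOnNhd ℂ H Ω)
    (hsq : ∀ x ∈ Ω, sq x ^ 2 = A x ^ 2 - lam ^ 2)
    (hH : ∀ x ∈ Ω, H x ≠ 0 ∧ (H x) ^ 4 = (A x + lam) / (A x - lam))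
    (h : ℝ) (hh : 0 < h)
    (γ x₀ x₁ : ℂ) (hγ : γ ∈ Ω) (hx₀ : x₀ ∈ Ω) (hx₁ : x₁ ∈ Ω)
    -- the phase `z(x;γ) = ∫_γ^x √(A²-λ²) dt`
    (Z : ℂ → ℂ) (hZγ : Z γ = 0) (hZ : ∀ x ∈ Ω, HasDerivAt Z (sq x) x)
    -- `+`-series based at `x₀` and `-`-series based at `x₁`
    (wep wop wem wom : ℂ → ℂ)
    (hP : IsWKBSum Ω h 1 sq H x₀ wep wop)
    (hM : IsWKBSum Ω h (-1) sq H x₁ wem wom)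
    -- `-`-series based at `x₀` and `+`-series based at `x₁`
    (wem' wom' wep' wop' : ℂ → ℂ)
    (hM' : IsWKBSum Ω h (-1) sq H x₀ wem' wom')
    (hP' : IsWKBSum Ω h 1 sq H x₁ wep' wop') :
    ∀ x ∈ Ω,
      Wr (wkbPlus h Z H wep wop x) (wkbMinus h Z H wem wom x) = -4 * wep x₁ ∧
      Wr (wkbMinus h Z H wem' wom' x) (wkbPlus h Z H wep' wop' x) = 4 * wem' x₁ := by
  intro x hx
  have hpre : IsPreconnected Ω := isPreconnected_iff_preconnectedSpace.mpr inferInstance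
  have hHx := (hH x hx).1
  have hexp : Complex.exp (Z x / (h:ℂ)) * Complex.exp (-Z x / (h:ℂ)) = 1 := by
    rw [← Complex.exp_add]
    ring_nf
    exact Complex.exp_zero
  constructor
  · -- first Wronskian
    have hF0 : ∀ y ∈ Ω, HasDerivAt (fun t => wep t * wem t - wop t * wom t) 0 y := by
      intro y hy
      have h1 := (hP.2.2 y hy).1
      have h2 := (hP.2.2 y hy).2
      have h3 := (hM.2.2 y hy).1
      have h4 := (hM.2.2 y hy).2
      have := (h1.mul h3).sub (h2.mul h4)
      refine this.congr_deriv ?_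
      ring
    have hc : wep x * wem x - wop x * wom x = wep x₁ * wem x₁ - wop x₁ * wom x₁ :=
      const_of_hasDerivAt_zero hΩopen hpre hF0 hx hx₁
    have hval : wep x * wem x - wop x * wom x = wep x₁ := by
      rw [hc, hM.1, hM.2.1]; ring
    have key := wr_bracket (H x) (wep x) (wop x) (wem x) (wom x) hHx
    simp only [Wr, wkbPlus, wkbMinus]
    linear_combination Complex.exp (Z x / (h:ℂ)) * Complex.exp (-Z x / (h:ℂ)) * key -
      4 * (wep x * wem x - wop x * wom x) * hexp - 4 * hval
  · -- second Wronskian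
    have hF0 : ∀ y ∈ Ω, HasDerivAt (fun t => wep' t * wem' t - wop' t * wom' t) 0 y := by
      intro y hy
      have h1 := (hP'.2.2 y hy).1
      have h2 := (hP'.2.2 y hy).2
      have h3 := (hM'.2.2 y hy).1
      have h4 := (hM'.2.2 y hy).2
      have := (h1.mul h3).sub (h2.mul h4)
      refine this.congr_deriv ?_
      ring
    have hc : wep' x * wem' x - wop' x * wom' x = wep' x₁ * wem' x₁ - wop' x₁ * wom' x₁ :=
      const_of_hasDerivAt_zero hΩopen hpre hF0 hx hx₁
    have hval : wep' x * wem' x - wop' x * wom' x = wem' x₁ := by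
      rw [hc, hP'.1, hP'.2.1]; ring
    have key := wr_bracket (H x) (wep' x) (wop' x) (wem' x) (wom' x) hHx
    simp only [Wr, wkbPlus, wkbMinus]
    linear_combination -(Complex.exp (Z x / (h:ℂ)) * Complex.exp (-Z x / (h:ℂ))) * key +
      4 * (wep' x * wem' x - wop' x * wom' x) * hexp + 4 * hval


end
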